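/- The formal power series H(x) = ₂F₁([1/3,2/3],[1]; 27x^2/(1-2x)^3) ∈ Q[[x]] satisfies the linear differential equation x(1+x)(1-8x)(1-2x)^2 H'' + (1-2x)(1 - 12x - 24x^2 + 16x^3) H' - 24x(1+x) H = 0. -/

import Mathlib

open PowerSeries

/-- Formal composition `f ∘ g` of power series, valid when `g` has zero constant
term. -/
noncomputable def psComp (f g : ℚ⟦X⟧) : ℚ⟦X⟧ :=
  PowerSeries.mk fun n =>
    ∑ k ∈ Finset.range (n + 1), coeff k f * coeff n (g ^ k)

/-- The hypergeometric series `₂F₁([1/3,2/3],[1]; z)`. -/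
noncomputable def hyp2F1 : ℚ⟦X⟧ :=
  PowerSeries.mk fun n =>
    (ascPochhammer ℚ n).eval (1 / 3) * (ascPochhammer ℚ n).eval (2 / 3) /
      ((n.factorial : ℚ)) ^ 2

private lemma dpow (g : ℚ⟦X⟧) (k : ℕ) :
    derivative ℚ (g ^ (k + 1)) = ((k : ℚ⟦X⟧) + 1) * g ^ k * derivative ℚ g := by
  induction k with
  | zero => simp
  | succ k ih =>
    rw [pow_succ, Derivation.leibniz, ih, smul_eq_mul, smul_eq_mul]
    push_cast
    ring

private lemma coeff_pow_of_lt {g : ℚ⟦X⟧} (hg : constantCoeff g = 0) :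
    ∀ k n : ℕ, n < k → coeff n (g ^ k) = 0 := by
  intro k
  induction k with
  | zero => exact fun n h => absurd h (Nat.not_lt_zero n)
  | succ k ih =>
    intro n h
    rw [pow_succ, coeff_mul]
    apply Finset.sum_eq_zero
    rintro ⟨i, j⟩ hp
    rw [Finset.HasAntidiagonal.mem_antidiagonal] at hp
    rcases lt_or_ge i k with hi | hi
    · rw [ih i hi, zero_mul]
    · have hj : j = 0 := by omega
      subst hj
      rw [coeff_zero_eq_constantCoeff_apply, hg, mul_zero]

private lemma coeff_psComp {g : ℚ⟦X⟧} (hg : constantCoeff g = 0) (f : ℚ⟦X⟧)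
    {n N : ℕ} (h : n ≤ N) :
    coeff n (psComp f g) = ∑ k ∈ Finset.range (N + 1), coeff k f * coeff n (g ^ k) := by
  rw [psComp, coeff_mk]
  apply Finset.sum_subset
  · exact Finset.range_subset_range.mpr (by omega)
  · intro k hk hk'
    simp only [Finset.mem_range] at hk hk'
    rw [coeff_pow_of_lt hg k n (by omega), mul_zero]

private lemma psComp_zero (g : ℚ⟦X⟧) : psComp 0 g = 0 := by
  ext n
  simp [psComp, coeff_mk]

private lemma psComp_add (f₁ f₂ g : ℚ⟦X⟧) :
    psComp (f₁ + f₂) g = psComp f₁ g + psComp f₂ g := by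
  ext n
  simp [psComp, coeff_mk, add_mul, Finset.sum_add_distrib]

private lemma psComp_sub (f₁ f₂ g : ℚ⟦X⟧) :
    psComp (f₁ - f₂) g = psComp f₁ g - psComp f₂ g := by
  ext n
  simp [psComp, coeff_mk, sub_mul, Finset.sum_sub_distrib]

private lemma psComp_C_mul (q : ℚ) (f g : ℚ⟦X⟧) :
    psComp (C q * f) g = C q * psComp f g := by
  ext n
  simp [psComp, coeff_mk, coeff_C_mul, Finset.mul_sum, mul_assoc]

private lemma coeff_mul_congr {A B A' B' : ℚ⟦X⟧} (n : ℕ)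
    (hA : ∀ j ≤ n, coeff j A = coeff j A')
    (hB : ∀ j ≤ n, coeff j B = coeff j B') :
    coeff n (A * B) = coeff n (A' * B') := by
  rw [coeff_mul, coeff_mul]
  apply Finset.sum_congr rfl
  rintro ⟨i, j⟩ hp
  rw [Finset.HasAntidiagonal.mem_antidiagonal] at hp
  rw [hA i (by omega), hB j (by omega)]

private lemma psComp_X_mul {g : ℚ⟦X⟧} (hg : constantCoeff g = 0) (f : ℚ⟦X⟧) :
    psComp (X * f) g = g * psComp f g := by
  ext n
  rw [coeff_psComp hg _ (Nat.le_succ n), Finset.sum_range_succ']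
  have h2 : coeff n (g * psComp f g)
      = coeff n (g * ∑ k ∈ Finset.range (n + 1), C (coeff k f) * g ^ k) := by
    apply coeff_mul_congr n (fun j _ => rfl)
    intro j hj
    rw [coeff_psComp hg f hj, map_sum]
    exact Finset.sum_congr rfl fun k _ => (coeff_C_mul _ _ _).symm
  rw [h2, Finset.mul_sum, map_sum]
  simp only [coeff_zero_X_mul, zero_mul, add_zero, coeff_succ_X_mul]
  apply Finset.sum_congr rfl
  intro k _
  rw [show g * (C (coeff k f) * g ^ k) = C (coeff k f) * g ^ (k + 1) by ring,
    coeff_C_mul]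

private lemma psComp_deriv {g : ℚ⟦X⟧} (hg : constantCoeff g = 0) (f : ℚ⟦X⟧) :
    derivative ℚ (psComp f g) = psComp (derivative ℚ f) g * derivative ℚ g := by
  ext n
  rw [coeff_derivative, coeff_psComp hg f (le_refl (n + 1)), Finset.sum_range_succ']
  have h2 : coeff n (psComp (derivative ℚ f) g * derivative ℚ g)
      = coeff n ((∑ k ∈ Finset.range (n + 1), C (coeff k (derivative ℚ f)) * g ^ k)
          * derivative ℚ g) := by
    apply coeff_mul_congr n ?_ (fun j _ => rfl)
    intro j hj
    rw [coeff_psComp hg _ hj, map_sum]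
    exact Finset.sum_congr rfl fun k _ => (coeff_C_mul _ _ _).symm
  rw [h2, Finset.sum_mul, map_sum]
  simp only [pow_zero, coeff_one, Nat.succ_ne_zero, if_false, mul_zero, add_zero]
  rw [Finset.sum_mul]
  apply Finset.sum_congr rfl
  intro k _
  have e1 : C (coeff k (derivative ℚ f)) * g ^ k * derivative ℚ g
      = C (coeff (k + 1) f) * (((k : ℚ⟦X⟧) + 1) * g ^ k * derivative ℚ g) := by
    rw [coeff_derivative, map_mul]
    have : C ((k : ℚ) + 1) = ((k : ℚ⟦X⟧) + 1) := by
      rw [map_add, map_one, map_natCast]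
    rw [this]
    ring
  rw [e1, ← dpow g k, coeff_C_mul, coeff_derivative]
  ring


private lemma derivative_ofNat (n : ℕ) [n.AtLeastTwo] :
    derivative ℚ (OfNat.ofNat n : ℚ⟦X⟧) = 0 := by
  rw [← map_ofNat (C (R := ℚ)) n, derivative_C]

private lemma hc (m : ℕ) :
    9 * ((m : ℚ) + 1) ^ 2 *
        ((ascPochhammer ℚ (m + 1)).eval (1 / 3) * (ascPochhammer ℚ (m + 1)).eval (2 / 3) /
          (((m + 1).factorial : ℚ)) ^ 2)
      = (9 * (m : ℚ) ^ 2 + 9 * m + 2) *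
        ((ascPochhammer ℚ m).eval (1 / 3) * (ascPochhammer ℚ m).eval (2 / 3) /
          ((m.factorial : ℚ)) ^ 2) := by
  have hf : ((m.factorial : ℚ)) ≠ 0 := Nat.cast_ne_zero.mpr m.factorial_ne_zero
  have hm : ((m : ℚ) + 1) ≠ 0 := by positivity
  rw [ascPochhammer_succ_right, Nat.factorial_succ]
  simp only [Polynomial.eval_mul, Polynomial.eval_add, Polynomial.eval_X,
    Polynomial.eval_natCast]
  push_cast
  field_simp
  ring

private lemma hypODE :
    C (9 : ℚ) * (X * derivative ℚ (derivative ℚ hyp2F1))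
      - C (9 : ℚ) * (X * (X * derivative ℚ (derivative ℚ hyp2F1)))
      + C (9 : ℚ) * derivative ℚ hyp2F1
      - C (18 : ℚ) * (X * derivative ℚ hyp2F1)
      - C (2 : ℚ) * hyp2F1 = 0 := by
  ext m
  simp only [map_sub, map_add, coeff_C_mul, map_zero]
  match m with
  | 0 =>
    simp [coeff_zero_X_mul, ← coeff_zero_eq_constantCoeff_apply,
      coeff_derivative, hyp2F1, coeff_mk, ascPochhammer_one]
    norm_num
  | 1 =>
    simp [coeff_succ_X_mul, coeff_zero_X_mul, coeff_derivative,
      ← coeff_zero_eq_constantCoeff_apply, hyp2F1, coeff_mk,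
      ascPochhammer_succ_right, ascPochhammer_one]
    norm_num
  | (n + 2) =>
    simp only [coeff_succ_X_mul, coeff_derivative, hyp2F1, coeff_mk]
    have h := hc (n + 2)
    push_cast at h ⊢
    linear_combination h

theorem hyp2F1_pullback_ode :
    let H : ℚ⟦X⟧ := psComp hyp2F1 (27 * X ^ 2 * ((1 - 2 * X)⁻¹) ^ 3)
    X * (1 + X) * (1 - 8 * X) * (1 - 2 * X) ^ 2 * (derivative ℚ (derivative ℚ H)) +
      (1 - 2 * X) * (1 - 12 * X - 24 * X ^ 2 + 16 * X ^ 3) * (derivative ℚ H) -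
      24 * X * (1 + X) * H = 0 := by
  intro H
  rw [show H = psComp hyp2F1 (27 * X ^ 2 * ((1 - 2 * X)⁻¹) ^ 3) from rfl]
  have hu : ((1 : ℚ⟦X⟧) - 2 * X) * ((1 : ℚ⟦X⟧) - 2 * X)⁻¹ = 1 :=
    PowerSeries.mul_inv_cancel _ (by simp)
  set u : ℚ⟦X⟧ := ((1 : ℚ⟦X⟧) - 2 * X)⁻¹ with hudef
  have hg0 : constantCoeff (27 * X ^ 2 * u ^ 3) = 0 := by
    simp [map_mul, map_pow, constantCoeff_X]
  -- derivative of u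
  have hDt : derivative ℚ ((1 : ℚ⟦X⟧) - 2 * X) = -2 := by
    rw [show ((1 : ℚ⟦X⟧) - 2 * X) = 1 - (X + X) by ring]
    rw [map_sub, map_add, derivative_X, Derivation.map_one_eq_zero]
    ring
  have h1 : ((1 : ℚ⟦X⟧) - 2 * X) * derivative ℚ u + u * derivative ℚ ((1 : ℚ⟦X⟧) - 2 * X)
      = 0 := by
    have h := congrArg (derivative ℚ) hu
    rw [Derivation.leibniz, Derivation.map_one_eq_zero, smul_eq_mul, smul_eq_mul] at h
    linear_combination h
  have h2 : ((1 : ℚ⟦X⟧) - 2 * X) * derivative ℚ u = 2 * u := by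
    linear_combination h1 - u * hDt
  have hDu : derivative ℚ u = 2 * u ^ 2 := by
    linear_combination u * h2 - (derivative ℚ u) * hu
  have hDg : derivative ℚ (27 * X ^ 2 * u ^ 3) = 54 * X * u ^ 3 + 162 * X ^ 2 * u ^ 4 := by
    simp only [Derivation.leibniz, Derivation.leibniz_pow, derivative_X, derivative_ofNat 27,
      hDu, smul_eq_mul, nsmul_eq_mul, Nat.cast_ofNat]
    ring
  have hDDg : derivative ℚ (54 * X * u ^ 3 + 162 * X ^ 2 * u ^ 4)
      = 54 * u ^ 3 + 648 * X * u ^ 4 + 1296 * X ^ 2 * u ^ 5 := by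
    simp only [map_add, Derivation.leibniz, Derivation.leibniz_pow, derivative_X,
      derivative_ofNat 54, derivative_ofNat 162, hDu, smul_eq_mul, nsmul_eq_mul, Nat.cast_ofNat]
    ring
  set F2 : ℚ⟦X⟧ := psComp (derivative ℚ (derivative ℚ hyp2F1)) (27 * X ^ 2 * u ^ 3) with hF2
  set F1 : ℚ⟦X⟧ := psComp (derivative ℚ hyp2F1) (27 * X ^ 2 * u ^ 3) with hF1
  set F0 : ℚ⟦X⟧ := psComp hyp2F1 (27 * X ^ 2 * u ^ 3) with hF0
  have hH1 : derivative ℚ F0 = F1 * (54 * X * u ^ 3 + 162 * X ^ 2 * u ^ 4) := by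
    rw [hF0, psComp_deriv hg0, hDg, hF1]
  have hDF1 : derivative ℚ F1 = F2 * (54 * X * u ^ 3 + 162 * X ^ 2 * u ^ 4) := by
    rw [hF1, psComp_deriv hg0, hDg, hF2]
  have hH2 : derivative ℚ (derivative ℚ F0)
      = F2 * (54 * X * u ^ 3 + 162 * X ^ 2 * u ^ 4) * (54 * X * u ^ 3 + 162 * X ^ 2 * u ^ 4)
        + F1 * (54 * u ^ 3 + 648 * X * u ^ 4 + 1296 * X ^ 2 * u ^ 5) := by
    rw [hH1, Derivation.leibniz, smul_eq_mul, smul_eq_mul, hDF1, hDDg]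
    ring
  have hODE : 9 * ((27 * X ^ 2 * u ^ 3) * F2)
      - 9 * ((27 * X ^ 2 * u ^ 3) * ((27 * X ^ 2 * u ^ 3) * F2))
      + 9 * F1 - 18 * ((27 * X ^ 2 * u ^ 3) * F1) - 2 * F0 = 0 := by
    have h := congrArg (fun f => psComp f (27 * X ^ 2 * u ^ 3)) hypODE
    simp only [psComp_sub, psComp_add, psComp_C_mul, psComp_X_mul hg0, psComp_zero] at h
    simp only [map_ofNat] at h
    rw [← hF2, ← hF1, ← hF0] at h
    linear_combination h
  rw [hH2, hH1]
  linear_combination (12*X*(1+X)) * hODE + ((108 : ℚ⟦X⟧)*X*F1 + (108 : ℚ⟦X⟧)*X*u*F1 + (108 : ℚ⟦X⟧)*X*u^2*F1 + (108 : ℚ⟦X⟧)*X^2*F1 + (-108 : ℚ⟦X⟧)*X^2*u*F1 + (-324 : ℚ⟦X⟧)*X^2*u^2*F1 + (810 : ℚ⟦X⟧)*X^2*u^3*F1 + (-216 : ℚ⟦X⟧)*X^3*u*F1 + (2916 : ℚ⟦X⟧)*X^3*u^3*F2 + (-6480 : ℚ⟦X⟧)*X^3*u^3*F1 + (2916 :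 ℚ⟦X⟧)*X^3*u^4*F2 + (1296 : ℚ⟦X⟧)*X^3*u^4*F1 + (2916 : ℚ⟦X⟧)*X^3*u^5*F2 + (432 : ℚ⟦X⟧)*X^4*u^2*F1 + (2916 : ℚ⟦X⟧)*X^4*u^3*F2 + (-9072 : ℚ⟦X⟧)*X^4*u^3*F1 + (-2916 : ℚ⟦X⟧)*X^4*u^4*F2 + (-11664 : ℚ⟦X⟧)*X^4*u^4*F1 + (-8748 : ℚ⟦X⟧)*X^4*u^5*F2 + (17496 : ℚ⟦X⟧)*X^4*u^6*F2 + (2592 : ℚ⟦X⟧)*X^5*u^3*F1 + (-5832 : ℚ⟦X⟧)*X^5*u^4*F2 + (7776 : ℚ⟦X⟧)*X^5*u^4*F1 + (-131220 : ℚ⟦X⟧)*X^5*u^6*F2 + (26244 : ℚ⟦X⟧)*X^5*u^7*F2 + (20736 : ℚ⟦X⟧)*X^6*u^4*F1 + (11664 : ℚ⟦X⟧)*X^6*u^5*F2 + (-78732 : ℚ⟦X⟧)*X^6*u^6*F2 + (-236196 : ℚ⟦X⟧)*X^6*u^7*F2 + (69984 : ℚ⟦X⟧)*X^7*u^6*F2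 + (157464 : ℚ⟦X⟧)*X^7*u^7*F2 + (419904 : ℚ⟦X⟧)*X^8*u^7*F2) * hu
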